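/- Let b_1,…,b_N ∈ ℤ² be nonzero vectors spanning ℝ², with b_1+…+b_N = 0, ordered counterclockwise, and let Δ be the convex hull of the partial sums p_k = b_1+…+b_k (k = 1,…,N). Then for every 2-dimensional cone C of the secondary fan, the Euclidean area of Δ equals (1/2)·Σ_{1 ≤ i < j ≤ N} |det(b_i,b_j)| − Σ_{{i,j} ∈ L_C} |det(b_i,b_j)|. -/

import Mathlib

noncomputable section
open scoped Classical

/-- `det(u,v) = u₁v₂ - v₁u₂` for `u, v ∈ ℝ²`. -/
def det2 (u v : ℝ × ℝ) : ℝ := u.1 * v.2 - v.1 * u.2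

/-- The canonical embedding `ℤ² → ℝ²`. -/
def toR2 (v : ℤ × ℤ) : ℝ × ℝ := ((v.1 : ℝ), (v.2 : ℝ))

/-- Counterclockwise ordering of a family of plane vectors. -/
def CCW {N : ℕ} (b : Fin N → ℝ × ℝ) : Prop :=
  ∃ θ r : Fin N → ℝ, Monotone θ ∧ (∀ i j, θ i < θ j + 2 * Real.pi) ∧
    ∀ i, 0 < r i ∧ b i = (r i * Real.cos (θ i), r i * Real.sin (θ i))

/-- The ray `ℝ_{≥0}·v`. -/
def rayThru (v : ℝ × ℝ) : Set (ℝ × ℝ) := {x | ∃ t : ℝ, 0 ≤ t ∧ x = t • v}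

/-- `C` is a 2-dimensional cone of the secondary fan of `b`: the closure of a
connected component of the complement of the union of the rays `ℝ_{≥0}·b i`. -/
def IsSecCone {N : ℕ} (b : Fin N → ℝ × ℝ) (C : Set (ℝ × ℝ)) : Prop :=
  ∃ x ∈ (⋃ i, rayThru (b i))ᶜ,
    C = closure (connectedComponentIn ((⋃ i, rayThru (b i))ᶜ) x)

/-- The cone `ℝ_{≥0}·u + ℝ_{≥0}·v`. -/
def posCone (u v : ℝ × ℝ) : Set (ℝ × ℝ) :=
  {x | ∃ s t : ℝ, 0 ≤ s ∧ 0 ≤ t ∧ x = s • u + t • v}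

/-- `Σ_{{i,j} ∈ L_C} |det(b i, b j)|`, where `L_C` is the set of 2-element subsets
`{i,j}` with `C ⊆ ℝ_{≥0}·b i + ℝ_{≥0}·b j`. -/
noncomputable def LCsum {N : ℕ} (b : Fin N → ℝ × ℝ) (C : Set (ℝ × ℝ)) : ℝ :=
  ∑ i, ∑ j, if i < j ∧ C ⊆ posCone (b i) (b j) then |det2 (b i) (b j)| else 0

open MeasureTheory Real




lemma det2_add_left (a b v : ℝ × ℝ) : det2 (a + b) v = det2 a v + det2 b v := by
  simp [det2]; ring_nf

lemma det2_zero_left (v : ℝ × ℝ) : det2 0 v = 0 := by simp [det2]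

lemma det2_swap (u v : ℝ × ℝ) : det2 u v = - det2 v u := by simp [det2]

lemma det2_sum_left {ι : Type*} (s : Finset ι) (f : ι → ℝ × ℝ) (v : ℝ × ℝ) :
    det2 (∑ i ∈ s, f i) v = ∑ i ∈ s, det2 (f i) v := by
  induction s using Finset.induction with
  | empty => simp [det2]
  | insert _ _ h ih => rw [Finset.sum_insert h, Finset.sum_insert h, det2_add_left, ih]

lemma det2_sum_right {ι : Type*} (s : Finset ι) (f : ι → ℝ × ℝ) (v : ℝ × ℝ) :
    det2 v (∑ i ∈ s, f i) = ∑ i ∈ s, det2 v (f i) := by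
  rw [det2_swap, det2_sum_left, ← Finset.sum_neg_distrib]
  exact Finset.sum_congr rfl fun i _ => by rw [det2_swap v (f i)]

lemma cramer2 (u v x : ℝ × ℝ) : det2 u v • x = det2 x v • u + det2 u x • v := by
  ext <;> simp [det2] <;> ring

lemma jacobi2 (u v w : ℝ × ℝ) : det2 u w • v = det2 u v • w + det2 v w • u := by
  ext <;> simp [det2] <;> ring

lemma span_singleton_ne_top (u : ℝ × ℝ) : Submodule.span ℝ {u} ≠ ⊤ := by
  intro h
  have h1 : ((-u.2, u.1) : ℝ × ℝ) ∈ Submodule.span ℝ {u} := h ▸ Submodule.mem_top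
  have h2 : ((u.1+1, u.2) : ℝ × ℝ) ∈ Submodule.span ℝ {u} := h ▸ Submodule.mem_top
  obtain ⟨c, hc⟩ := Submodule.mem_span_singleton.1 h1
  obtain ⟨d, hd⟩ := Submodule.mem_span_singleton.1 h2
  have hc1 : c * u.1 = -u.2 := congrArg Prod.fst hc
  have hc2 : c * u.2 = u.1 := congrArg Prod.snd hc
  have key : u.1 * u.1 + u.2 * u.2 = 0 := by linear_combination u.2 * hc1 - u.1 * hc2
  have h11 : u.1 * u.1 = 0 := by nlinarith [mul_self_nonneg u.1, mul_self_nonneg u.2]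
  have hu1 : u.1 = 0 := mul_self_eq_zero.mp h11
  have hd1 : d * u.1 = u.1 + 1 := congrArg Prod.fst hd
  rw [hu1] at hd1; simp at hd1

lemma mem_span_of_det2 {u x : ℝ × ℝ} (hu : u ≠ 0) (h : det2 u x = 0) :
    x ∈ Submodule.span ℝ {u} := by
  rcases eq_or_ne u.1 0 with h1 | h1
  · have h2 : u.2 ≠ 0 := by
      intro h2; exact hu (Prod.ext h1 h2)
    refine Submodule.mem_span_singleton.2 ⟨x.2 / u.2, ?_⟩
    have hh : u.1 * x.2 - x.1 * u.2 = 0 := h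
    ext
    · simp only [Prod.smul_fst, smul_eq_mul]
      field_simp
      nlinarith [hh]
    · simp only [Prod.smul_snd, smul_eq_mul]
      field_simp
  · refine Submodule.mem_span_singleton.2 ⟨x.1 / u.1, ?_⟩
    have hh : u.1 * x.2 - x.1 * u.2 = 0 := h
    ext
    · simp only [Prod.smul_fst, smul_eq_mul]; field_simp
    · simp only [Prod.smul_snd, smul_eq_mul]; field_simp; nlinarith [hh]

lemma null_line {u : ℝ × ℝ} (hu : u ≠ 0) : volume {x : ℝ × ℝ | det2 u x = 0} = 0 := by
  refine measure_mono_null (fun x hx => mem_span_of_det2 hu hx) ?_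
  exact Measure.addHaar_submodule volume _ (span_singleton_ne_top u)

-- the standard simplex
def S2 : Set (ℝ × ℝ) := {p | 0 ≤ p.1 ∧ 0 ≤ p.2 ∧ p.1 + p.2 ≤ 1}

lemma S2_convex : Convex ℝ S2 := by
  intro p hp q hq a b ha hb hab
  obtain ⟨hp1, hp2, hp3⟩ := hp
  obtain ⟨hq1, hq2, hq3⟩ := hq
  refine ⟨?_, ?_, ?_⟩ <;>
    simp only [Prod.fst_add, Prod.snd_add, Prod.smul_fst, Prod.smul_snd, smul_eq_mul] <;>
    nlinarith

lemma S2_eq : convexHull ℝ {(0 : ℝ × ℝ), (1, 0), (0, 1)} = S2 := by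
  apply le_antisymm
  · apply convexHull_min _ S2_convex
    intro x hx
    rcases hx with h | h | h <;> subst h <;> norm_num [S2]
  · intro p hp
    obtain ⟨hp1, hp2, hp3⟩ := hp
    have hmem := Finset.centerMass_mem_convexHull (Finset.univ : Finset (Fin 3))
      (w := ![1 - p.1 - p.2, p.1, p.2]) (z := ![(0 : ℝ × ℝ), (1, 0), (0, 1)])
      (by intro i _; fin_cases i <;> simp <;> linarith)
      (by rw [Fin.sum_univ_three]; simp; linarith)
      (s := {(0 : ℝ × ℝ), (1, 0), (0, 1)})
      (by intro i _; fin_cases i <;> simp)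
    have heq : (Finset.univ : Finset (Fin 3)).centerMass
        ![1 - p.1 - p.2, p.1, p.2] ![(0 : ℝ × ℝ), (1, 0), (0, 1)] = p := by
      rw [Finset.centerMass_eq_of_sum_1 _ _ (by rw [Fin.sum_univ_three]; simp; ring)]
      rw [Fin.sum_univ_three]
      ext <;> simp
    rw [← heq]; exact hmem

lemma S2_measurable : MeasurableSet S2 := by
  have : S2 = {p : ℝ × ℝ | 0 ≤ p.1} ∩ ({p | 0 ≤ p.2} ∩ {p | p.1 + p.2 ≤ 1}) := by
    ext p; simp [S2, and_assoc]
  rw [this]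
  exact (measurableSet_le measurable_const measurable_fst).inter
    ((measurableSet_le measurable_const measurable_snd).inter
      (measurableSet_le (measurable_fst.add measurable_snd) measurable_const))

lemma S2_volume : volume S2 = ENNReal.ofReal (1 / 2 : ℝ) := by
  rw [Measure.volume_eq_prod, Measure.prod_apply S2_measurable]
  have hslice : ∀ x : ℝ, volume (Prod.mk x ⁻¹' S2) =
      (Set.Icc (0:ℝ) 1).indicator (fun x => ENNReal.ofReal (1 - x)) x := by
    intro x
    have : (Prod.mk x ⁻¹' S2) =
        if x ∈ Set.Icc (0:ℝ) 1 then Set.Icc 0 (1 - x) else ∅ := by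
      ext y
      simp only [Set.mem_preimage, S2, Set.mem_setOf_eq, Set.mem_Icc]
      split_ifs with h
      · simp only [Set.mem_Icc]
        constructor
        · rintro ⟨_, h2, h3⟩; exact ⟨h2, by linarith⟩
        · rintro ⟨h2, h3⟩; exact ⟨h.1, h2, by linarith⟩
      · simp only [Set.mem_empty_iff_false, iff_false]
        rintro ⟨h1, h2, h3⟩
        exact h ⟨h1, by linarith⟩
    rw [this]
    by_cases h : x ∈ Set.Icc (0:ℝ) 1
    · rw [if_pos h, Set.indicator_of_mem h, Real.volume_Icc]; norm_num
    · rw [if_neg h, Set.indicator_of_notMem h, measure_empty]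
  rw [lintegral_congr hslice, lintegral_indicator measurableSet_Icc _]
  rw [← ofReal_integral_eq_lintegral_ofReal]
  · congr 1
    rw [MeasureTheory.integral_Icc_eq_integral_Ioc, ← intervalIntegral.integral_of_le zero_le_one]
    rw [intervalIntegral.integral_sub intervalIntegrable_const intervalIntegral.intervalIntegrable_id]
    simp [integral_id]
    norm_num
  · exact (continuous_const.sub continuous_id).integrableOn_Icc
  · refine (ae_restrict_iff' measurableSet_Icc).2 (Filter.Eventually.of_forall ?_)
    intro x hx
    simp only [Pi.zero_apply]
    linarith [hx.2]

def triMap (u v : ℝ × ℝ) : (ℝ × ℝ) →ₗ[ℝ] (ℝ × ℝ) :=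
  Matrix.toLin (Module.Basis.finTwoProd ℝ) (Module.Basis.finTwoProd ℝ) !![u.1, v.1; u.2, v.2]

lemma triMap_apply (u v : ℝ × ℝ) (x : ℝ × ℝ) :
    triMap u v x = (u.1 * x.1 + v.1 * x.2, u.2 * x.1 + v.2 * x.2) := by
  have := Matrix.toLin_finTwoProd_apply u.1 v.1 u.2 v.2 x
  simpa [triMap] using this

lemma triMap_det (u v : ℝ × ℝ) : LinearMap.det (triMap u v) = det2 u v := by
  rw [triMap, ← LinearMap.det_toMatrix (Module.Basis.finTwoProd ℝ), LinearMap.toMatrix_toLin]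
  rw [Matrix.det_fin_two]
  simp [det2]

lemma line_convex (u : ℝ × ℝ) : Convex ℝ {x : ℝ × ℝ | det2 u x = 0} := by
  intro x hx y hy a b _ _ _
  simp only [Set.mem_setOf_eq, det2] at *
  simp only [Prod.fst_add, Prod.snd_add, Prod.smul_fst, Prod.smul_snd, smul_eq_mul]
  linear_combination a * hx + b * hy

lemma hull_null_of_det2_eq_zero {u v : ℝ × ℝ} (h : det2 u v = 0) :
    volume (convexHull ℝ {(0 : ℝ × ℝ), u, v}) = 0 := by
  have key : ∀ w : ℝ × ℝ, w ≠ 0 → det2 w u = 0 → det2 w v = 0 →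
      volume (convexHull ℝ {(0 : ℝ × ℝ), u, v}) = 0 := by
    intro w hw h1 h2
    refine measure_mono_null (convexHull_min ?_ (line_convex w)) (null_line hw)
    intro x hx
    rcases hx with h | h | h <;> subst h
    · simp [det2]
    · exact h1
    · exact h2
  rcases eq_or_ne u 0 with hu | hu
  · rcases eq_or_ne v 0 with hv | hv
    · exact key (1, 0) (by simp [Prod.ext_iff]) (by simp [hu, det2]) (by simp [hv, det2])
    · refine key v hv (by simp [hu, det2]) (by simp [det2])
  · refine key u hu (by simp [det2]) h

lemma volume_triangle (u v : ℝ × ℝ) (h : 0 ≤ det2 u v) :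
    volume (convexHull ℝ {(0 : ℝ × ℝ), u, v}) = ENNReal.ofReal (det2 u v / 2) := by
  rcases eq_or_lt_of_le h with h0 | hpos
  · rw [← h0, hull_null_of_det2_eq_zero h0.symm]
    norm_num
  · have himg : triMap u v '' (convexHull ℝ {(0 : ℝ × ℝ), (1, 0), (0, 1)}) =
        convexHull ℝ {(0 : ℝ × ℝ), u, v} := by
      rw [LinearMap.image_convexHull]
      congr 1
      rw [Set.image_insert_eq, Set.image_insert_eq, Set.image_singleton]
      simp [triMap_apply]; rfl
    rw [← himg, Measure.addHaar_image_linearMap, triMap_det, S2_eq, S2_volume,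
      abs_of_pos hpos, ← ENNReal.ofReal_mul (le_of_lt hpos)]
    congr 1
    ring

lemma det2_sum_right' {ι : Type*} (s : Finset ι) (f : ι → ℝ × ℝ) (v : ℝ × ℝ) :
    det2 v (∑ i ∈ s, f i) = ∑ i ∈ s, det2 v (f i) := by
  induction s using Finset.induction with
  | empty => simp [det2]
  | insert _ _ h ih => rw [Finset.sum_insert h, Finset.sum_insert h, ← ih]; simp [det2]; ring

lemma det2_sub_right (u a b : ℝ × ℝ) : det2 u (a - b) = det2 u a - det2 u b := by
  simp [det2]; ring

-- sin sign helpers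
lemma sin_nonpos_of_pi_le {x : ℝ} (h1 : π ≤ x) (h2 : x ≤ 2 * π) : Real.sin x ≤ 0 := by
  have h3 : Real.sin (x - π) = -Real.sin x := by
    rw [Real.sin_sub]; simp
  have h4 : 0 ≤ Real.sin (x - π) :=
    Real.sin_nonneg_of_nonneg_of_le_pi (by linarith) (by linarith)
  linarith [h3 ▸ h4]

lemma sin_nonpos_of_neg {x : ℝ} (h1 : -π ≤ x) (h2 : x ≤ 0) : Real.sin x ≤ 0 := by
  have h4 : 0 ≤ Real.sin (-x) := Real.sin_nonneg_of_nonneg_of_le_pi (by linarith) (by linarith)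
  rw [Real.sin_neg] at h4; linarith

lemma sin_nonneg_of_neg {x : ℝ} (h1 : -(2*π) ≤ x) (h2 : x ≤ -π) : 0 ≤ Real.sin x := by
  have h3 : Real.sin (x + 2*π) = Real.sin x := by
    rw [Real.sin_add]; simp [Real.sin_two_pi, Real.cos_two_pi]
  have h4 : 0 ≤ Real.sin (x + 2*π) :=
    Real.sin_nonneg_of_nonneg_of_le_pi (by linarith) (by linarith)
  linarith [h3 ▸ h4]

lemma sin_neg_of_pi_lt {x : ℝ} (h1 : π < x) (h2 : x < 2 * π) : Real.sin x < 0 := by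
  have h3 : Real.sin (x - π) = -Real.sin x := by rw [Real.sin_sub]; simp
  have h4 : 0 < Real.sin (x - π) := Real.sin_pos_of_pos_of_lt_pi (by linarith) (by linarith)
  linarith [h3 ▸ h4]

lemma sin_neg_of_neg {x : ℝ} (h1 : -π < x) (h2 : x < 0) : Real.sin x < 0 := by
  have h4 : 0 < Real.sin (-x) := Real.sin_pos_of_pos_of_lt_pi (by linarith) (by linarith)
  rw [Real.sin_neg] at h4; linarith

def PS (B : ℕ → ℝ × ℝ) (m : ℕ) : ℝ × ℝ := ∑ i ∈ Finset.range m, B i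

lemma detBB {N : ℕ} {B : ℕ → ℝ × ℝ} {θ R : ℕ → ℝ}
    (hBrep : ∀ i, i < N → B i = (R i * Real.cos (θ i), R i * Real.sin (θ i)))
    (k i : ℕ) (hk : k < N) (hi : i < N) :
    det2 (B k) (B i) = R k * R i * Real.sin (θ i - θ k) := by
  rw [hBrep k hk, hBrep i hi]
  simp [det2, Real.sin_sub]
  ring

lemma Hlem {N : ℕ} {B : ℕ → ℝ × ℝ} {θ R : ℕ → ℝ}
    (hBrep : ∀ i, i < N → B i = (R i * Real.cos (θ i), R i * Real.sin (θ i)))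
    (hR : ∀ i, i < N → 0 < R i)
    (hmono : ∀ i j, i ≤ j → j < N → θ i ≤ θ j)
    (hwrap : ∀ i j, i < N → j < N → θ i < θ j + 2 * π)
    (hzero : ∑ i ∈ Finset.range N, B i = 0)
    (k m : ℕ) (hk : k < N) (hm : m ≤ N) :
    0 ≤ det2 (B k) (PS B m - PS B k) := by
  set c : ℕ → ℝ := fun i => det2 (B k) (B i) with hc
  have hcnn : ∀ j, k ≤ j → j < N → θ j ≤ θ k + π → 0 ≤ c j := by
    intro j h1 h2 h3
    show 0 ≤ det2 (B k) (B j)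
    rw [detBB hBrep k j hk h2]
    have := hmono k j h1 h2
    exact mul_nonneg (mul_nonneg (hR k hk).le (hR j h2).le)
      (Real.sin_nonneg_of_nonneg_of_le_pi (by linarith) (by linarith))
  have htot : ∑ i ∈ Finset.range N, c i = 0 := by
    rw [hc, ← det2_sum_right', hzero]; simp [det2]
  have hexpand : det2 (B k) (PS B m - PS B k) =
      ∑ i ∈ Finset.range m, c i - ∑ i ∈ Finset.range k, c i := by
    rw [det2_sub_right, PS, PS, det2_sum_right', det2_sum_right']
  rcases le_or_gt k m with hkm | hkm
  · -- k ≤ m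
    have hIco : det2 (B k) (PS B m - PS B k) = ∑ i ∈ Finset.Ico k m, c i := by
      rw [hexpand, Finset.sum_Ico_eq_sub _ hkm]
    rw [hIco]
    by_cases hA : ∀ i, k ≤ i → i < m → θ i ≤ θ k + π
    · apply Finset.sum_nonneg
      intro i hi
      rw [Finset.mem_Ico] at hi
      exact hcnn i hi.1 (lt_of_lt_of_le hi.2 hm) (hA i hi.1 hi.2)
    · push_neg at hA
      obtain ⟨i0, hi0k, hi0m, hθi0⟩ := hA
      have hi0N : i0 < N := lt_of_lt_of_le hi0m hm
      have e1 : ∑ i ∈ Finset.Ico k m, c i + ∑ i ∈ Finset.Ico m N, c i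
          = ∑ i ∈ Finset.Ico k N, c i := Finset.sum_Ico_consecutive _ hkm hm
      have e2 : ∑ i ∈ Finset.range k, c i + ∑ i ∈ Finset.Ico k N, c i
          = ∑ i ∈ Finset.range N, c i := Finset.sum_range_add_sum_Ico _ hk.le
      have hsplit : ∑ i ∈ Finset.range k, c i + ∑ i ∈ Finset.Ico k m, c i
          + ∑ i ∈ Finset.Ico m N, c i = 0 := by linarith
      have h1 : ∑ i ∈ Finset.Ico m N, c i ≤ 0 := by
        apply Finset.sum_nonpos
        intro j hj
        rw [Finset.mem_Ico] at hj
        have hθj : θ i0 ≤ θ j := hmono i0 j (le_trans (le_of_lt hi0m) hj.1) hj.2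
        have hw := hwrap j k hj.2 hk
        show det2 (B k) (B j) ≤ 0
        rw [detBB hBrep k j hk hj.2]
        exact mul_nonpos_of_nonneg_of_nonpos
          (mul_nonneg (hR k hk).le (hR j hj.2).le)
          (sin_nonpos_of_pi_le (by linarith) (by linarith))
      have h2 : ∑ i ∈ Finset.range k, c i ≤ 0 := by
        apply Finset.sum_nonpos
        intro j hj
        rw [Finset.mem_range] at hj
        have hjN : j < N := lt_trans hj hk
        have hθj : θ j ≤ θ k := hmono j k (le_of_lt hj) hk
        have hw := hwrap i0 j hi0N hjN
        show det2 (B k) (B j) ≤ 0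
        rw [detBB hBrep k j hk hjN]
        exact mul_nonpos_of_nonneg_of_nonpos
          (mul_nonneg (hR k hk).le (hR j hjN).le)
          (sin_nonpos_of_neg (by linarith) (by linarith))
      linarith
  · -- m < k
    have hIco : det2 (B k) (PS B m - PS B k) = -∑ i ∈ Finset.Ico m k, c i := by
      rw [hexpand, Finset.sum_Ico_eq_sub _ hkm.le]; ring
    by_cases hcase : θ k + π ≤ θ m + 2 * π
    · rw [hIco]
      have h1 : ∑ i ∈ Finset.Ico m k, c i ≤ 0 := by
        apply Finset.sum_nonpos
        intro j hj
        rw [Finset.mem_Ico] at hj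
        have hjN : j < N := lt_trans hj.2 hk
        have hθ1 : θ m ≤ θ j := hmono m j hj.1 hjN
        have hθ2 : θ j ≤ θ k := hmono j k hj.2.le hk
        show det2 (B k) (B j) ≤ 0
        rw [detBB hBrep k j hk hjN]
        exact mul_nonpos_of_nonneg_of_nonpos
          (mul_nonneg (hR k hk).le (hR j hjN).le)
          (sin_nonpos_of_neg (by linarith) (by linarith))
      linarith
    · push_neg at hcase
      have hmN : m < N := lt_trans hkm hk
      have hsplit : ∑ i ∈ Finset.range k, c i + ∑ i ∈ Finset.Ico k N, c i = 0 := by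
        rw [Finset.sum_range_add_sum_Ico _ hk.le]; exact htot
      have hgoal : det2 (B k) (PS B m - PS B k) =
          ∑ i ∈ Finset.range m, c i + ∑ i ∈ Finset.Ico k N, c i := by
        rw [hexpand]; linarith
      rw [hgoal]
      have h1 : 0 ≤ ∑ i ∈ Finset.range m, c i := by
        apply Finset.sum_nonneg
        intro j hj
        rw [Finset.mem_range] at hj
        have hjN : j < N := lt_trans hj hmN
        have hθ1 : θ j ≤ θ m := hmono j m hj.le hmN
        have hw := hwrap k j hk hjN
        show 0 ≤ det2 (B k) (B j)
        rw [detBB hBrep k j hk hjN]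
        exact mul_nonneg (mul_nonneg (hR k hk).le (hR j hjN).le)
          (sin_nonneg_of_neg (by linarith) (by linarith))
      have h2 : 0 ≤ ∑ i ∈ Finset.Ico k N, c i := by
        apply Finset.sum_nonneg
        intro j hj
        rw [Finset.mem_Ico] at hj
        have hθ1 : θ k ≤ θ j := hmono k j hj.1 hj.2
        have hw := hwrap j m hj.2 hmN
        exact hcnn j hj.1 hj.2 (by linarith)
      linarith

lemma det2_self (x : ℝ × ℝ) : det2 x x = 0 := by simp [det2, mul_comm]

lemma det2_add_right (u a b : ℝ × ℝ) : det2 u (a + b) = det2 u a + det2 u b := by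
  simp [det2]; ring

lemma det2_smul_right (u : ℝ × ℝ) (c : ℝ) (v : ℝ × ℝ) : det2 u (c • v) = c * det2 u v := by
  simp [det2]; ring

lemma det2_neg_right (u v : ℝ × ℝ) : det2 u (-v) = - det2 u v := by
  simp [det2]; ring

lemma PS_succ (B : ℕ → ℝ × ℝ) (m : ℕ) : PS B (m+1) = PS B m + B m :=
  Finset.sum_range_succ _ _

lemma Zstrict {N : ℕ} {B : ℕ → ℝ × ℝ} {θ R : ℕ → ℝ}
    (hBrep : ∀ i, i < N → B i = (R i * Real.cos (θ i), R i * Real.sin (θ i)))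
    (hR : ∀ i, i < N → 0 < R i)
    (hmono : ∀ i j, i ≤ j → j < N → θ i ≤ θ j)
    (S : Finset ℕ) (hne : S.Nonempty)
    (hsub : ∀ i ∈ S, i < N) (hS0 : ∑ i ∈ S, B i = 0)
    (hwin : ∀ i ∈ S, ∀ j ∈ S, θ j - θ i < π) : False := by
  set i0 := S.min' hne with hi0
  have hi0S : i0 ∈ S := S.min'_mem hne
  have hi0N := hsub _ hi0S
  have hsum : ∑ j ∈ S, det2 (B i0) (B j) = 0 := by
    rw [← det2_sum_right', hS0]; simp [det2]
  have hterm : ∀ j ∈ S, det2 (B i0) (B j) = R i0 * R j * Real.sin (θ j - θ i0) :=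
    fun j hj => detBB hBrep _ _ hi0N (hsub _ hj)
  have hfacts : ∀ j ∈ S, θ i0 ≤ θ j ∧ θ j - θ i0 < π := by
    intro j hj
    exact ⟨hmono i0 j (S.min'_le j hj) (hsub _ hj), hwin i0 hi0S j hj⟩
  have hnn : ∀ j ∈ S, 0 ≤ det2 (B i0) (B j) := by
    intro j hj
    obtain ⟨h1, h2⟩ := hfacts j hj
    rw [hterm j hj]
    exact mul_nonneg (mul_nonneg (hR _ hi0N).le (hR _ (hsub _ hj)).le)
      (Real.sin_nonneg_of_nonneg_of_le_pi (by linarith) (by linarith))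
  have hz := (Finset.sum_eq_zero_iff_of_nonneg hnn).1 hsum
  have hθeq : ∀ j ∈ S, θ j = θ i0 := by
    intro j hj
    obtain ⟨h1, h2⟩ := hfacts j hj
    have h3 := hz j hj
    rw [hterm j hj] at h3
    rcases mul_eq_zero.1 h3 with h4 | h4
    · exact absurd h4 (ne_of_gt (mul_pos (hR _ hi0N) (hR _ (hsub _ hj))))
    · by_contra hne2
      have h5 : 0 < Real.sin (θ j - θ i0) :=
        Real.sin_pos_of_pos_of_lt_pi
          (lt_of_le_of_ne (by linarith) (fun hcon => hne2 (by linarith))) (by linarith)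
      linarith
  have hfst : (0 : ℝ) = ∑ j ∈ S, R j * Real.cos (θ i0) := by
    have := congrArg Prod.fst hS0
    rw [Prod.fst_sum] at this
    simp only [Prod.fst_zero] at this
    rw [← this]
    apply Finset.sum_congr rfl
    intro j hj
    rw [hBrep j (hsub _ hj), hθeq j hj]
  have hsnd : (0 : ℝ) = ∑ j ∈ S, R j * Real.sin (θ i0) := by
    have := congrArg Prod.snd hS0
    rw [Prod.snd_sum] at this
    simp only [Prod.snd_zero] at this
    rw [← this]
    apply Finset.sum_congr rfl
    intro j hj
    rw [hBrep j (hsub _ hj), hθeq j hj]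
  have hRpos : 0 < ∑ j ∈ S, R j :=
    Finset.sum_pos (fun j hj => hR _ (hsub _ hj)) hne
  rw [← Finset.sum_mul] at hfst hsnd
  have hcos : Real.cos (θ i0) = 0 := by
    rcases mul_eq_zero.1 hfst.symm with h | h
    · exact absurd h (ne_of_gt hRpos)
    · exact h
  have hsin : Real.sin (θ i0) = 0 := by
    rcases mul_eq_zero.1 hsnd.symm with h | h
    · exact absurd h (ne_of_gt hRpos)
    · exact h
  have := Real.sin_sq_add_cos_sq (θ i0)
  rw [hcos, hsin] at this
  norm_num at this

lemma NZlem {N : ℕ} {B : ℕ → ℝ × ℝ} {θ R : ℕ → ℝ}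
    (hBrep : ∀ i, i < N → B i = (R i * Real.cos (θ i), R i * Real.sin (θ i)))
    (hR : ∀ i, i < N → 0 < R i)
    (hmono : ∀ i j, i ≤ j → j < N → θ i ≤ θ j)
    (hwrap : ∀ i j, i < N → j < N → θ i < θ j + 2 * π)
    (hzero : ∑ i ∈ Finset.range N, B i = 0)
    (c : ℕ) (hc0 : 0 < c) (hcN : c < N) : PS B c ≠ 0 := by
  intro h0
  have h0' : ∑ i ∈ Finset.range c, B i = 0 := h0
  have hblock2 : ∑ i ∈ Finset.Ico c N, B i = 0 := by
    have h1 := Finset.sum_range_add_sum_Ico B hcN.le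
    rw [hzero, h0'] at h1
    simpa using h1
  rcases lt_or_ge (θ (c-1) - θ 0) π with hw | hw
  · refine Zstrict hBrep hR hmono (Finset.range c) ⟨0, by simp [hc0]⟩
      (fun i hi => lt_trans (Finset.mem_range.1 hi) hcN) h0' ?_
    intro i hi j hj
    rw [Finset.mem_range] at hi hj
    have h1 : θ j ≤ θ (c-1) := hmono j (c-1) (by omega) (by omega)
    have h2 : θ 0 ≤ θ i := hmono 0 i (Nat.zero_le _) (by omega)
    linarith
  · refine Zstrict hBrep hR hmono (Finset.Ico c N) ⟨c, Finset.mem_Ico.2 ⟨le_rfl, hcN⟩⟩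
      (fun i hi => (Finset.mem_Ico.1 hi).2) hblock2 ?_
    intro i hi j hj
    rw [Finset.mem_Ico] at hi hj
    have h1 : θ j ≤ θ (N-1) := hmono j (N-1) (by omega) (by omega)
    have h2 : θ c ≤ θ i := hmono c i hi.1 hi.2
    have h3 : θ (N-1) < θ 0 + 2*π := hwrap (N-1) 0 (by omega) (by omega)
    have h4 : θ (c-1) ≤ θ c := hmono (c-1) c (by omega) hcN
    linarith

lemma GapLem {N : ℕ} {B : ℕ → ℝ × ℝ} {θ R : ℕ → ℝ}
    (hBrep : ∀ i, i < N → B i = (R i * Real.cos (θ i), R i * Real.sin (θ i)))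
    (hR : ∀ i, i < N → 0 < R i)
    (hmono : ∀ i j, i ≤ j → j < N → θ i ≤ θ j)
    (hzero : ∑ i ∈ Finset.range N, B i = 0)
    (hN : 0 < N)
    (hNC : ¬ ∀ i, i < N → ∃ t : ℝ, B i = t • B 0) : π < θ (N-1) - θ 0 := by
  by_contra hle
  push_neg at hle
  apply hNC
  intro i hiN
  have hR0 := hR 0 hN
  have hRi := hR i hiN
  have hsum : ∑ j ∈ Finset.range N, det2 (B 0) (B j) = 0 := by
    rw [← det2_sum_right', hzero]; simp [det2]
  have hnn : ∀ j ∈ Finset.range N, 0 ≤ det2 (B 0) (B j) := by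
    intro j hj
    rw [Finset.mem_range] at hj
    rw [detBB hBrep 0 j hN hj]
    have h1 : θ 0 ≤ θ j := hmono 0 j (Nat.zero_le _) hj
    have h2 : θ j ≤ θ (N-1) := hmono j (N-1) (by omega) (by omega)
    exact mul_nonneg (mul_nonneg (hR 0 hN).le (hR j hj).le)
      (Real.sin_nonneg_of_nonneg_of_le_pi (by linarith) (by linarith))
  have hz := (Finset.sum_eq_zero_iff_of_nonneg hnn).1 hsum i (Finset.mem_range.2 hiN)
  rw [detBB hBrep 0 i hN hiN] at hz
  have hsin : Real.sin (θ i - θ 0) = 0 := by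
    rcases mul_eq_zero.1 hz with h | h
    · exact absurd h (ne_of_gt (mul_pos hR0 hRi))
    · exact h
  have h1 : θ 0 ≤ θ i := hmono 0 i (Nat.zero_le _) hiN
  have h2 : θ i ≤ θ (N-1) := hmono i (N-1) (by omega) (by omega)
  by_cases hcase : θ i - θ 0 < π
  · -- θ i = θ 0
    have hθ : θ i = θ 0 := by
      by_contra hne2
      have : 0 < Real.sin (θ i - θ 0) :=
        Real.sin_pos_of_pos_of_lt_pi
          (lt_of_le_of_ne (by linarith) (fun hcon => hne2 (by linarith))) hcase
      linarith
    refine ⟨R i / R 0, ?_⟩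
    rw [hBrep i hiN, hBrep 0 hN, hθ, Prod.smul_mk]
    simp only [smul_eq_mul]
    congr 1 <;> field_simp <;> ring
  · -- θ i = θ 0 + π
    have hθ : θ i = θ 0 + π := by
      have : θ i - θ 0 ≤ π := by linarith
      push_neg at hcase
      linarith
    refine ⟨-(R i / R 0), ?_⟩
    rw [hBrep i hiN, hBrep 0 hN, hθ, Prod.smul_mk]
    simp only [smul_eq_mul]
    have hcos := Real.cos_add_pi (θ 0)
    have hsin2 := Real.sin_add_pi (θ 0)
    rw [hcos, hsin2]
    congr 1 <;> field_simp <;> ring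

lemma Dnn {N : ℕ} {B : ℕ → ℝ × ℝ} {θ R : ℕ → ℝ}
    (hBrep : ∀ i, i < N → B i = (R i * Real.cos (θ i), R i * Real.sin (θ i)))
    (hR : ∀ i, i < N → 0 < R i)
    (hmono : ∀ i j, i ≤ j → j < N → θ i ≤ θ j)
    (hwrap : ∀ i j, i < N → j < N → θ i < θ j + 2 * π)
    (hzero : ∑ i ∈ Finset.range N, B i = 0)
    (k : ℕ) (hk : k < N) : 0 ≤ det2 (PS B k) (PS B (k+1)) := by
  have h := Hlem hBrep hR hmono hwrap hzero k N hk le_rfl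
  have hPN : PS B N = 0 := hzero
  rw [hPN] at h
  have h2 : det2 (B k) (0 - PS B k) = det2 (PS B k) (B k) := by simp [det2]; ring
  rw [h2] at h
  rw [PS_succ, det2_add_right, det2_self]
  linarith

lemma ConeE {N : ℕ} {B : ℕ → ℝ × ℝ} {θ R : ℕ → ℝ}
    (hBrep : ∀ i, i < N → B i = (R i * Real.cos (θ i), R i * Real.sin (θ i)))
    (hR : ∀ i, i < N → 0 < R i)
    (hmono : ∀ i j, i ≤ j → j < N → θ i ≤ θ j)
    (hwrap : ∀ i j, i < N → j < N → θ i < θ j + 2 * π)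
    (hzero : ∑ i ∈ Finset.range N, B i = 0)
    (hN : 0 < N) (m : ℕ) (hm : m ≤ N) : 0 ≤ det2 (B 0) (PS B m) := by
  have h := Hlem hBrep hR hmono hwrap hzero 0 m hN hm
  have : PS B 0 = 0 := by simp [PS]
  rw [this, sub_zero] at h
  exact h

lemma ConeF {N : ℕ} {B : ℕ → ℝ × ℝ} {θ R : ℕ → ℝ}
    (hBrep : ∀ i, i < N → B i = (R i * Real.cos (θ i), R i * Real.sin (θ i)))
    (hR : ∀ i, i < N → 0 < R i)
    (hmono : ∀ i j, i ≤ j → j < N → θ i ≤ θ j)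
    (hwrap : ∀ i j, i < N → j < N → θ i < θ j + 2 * π)
    (hzero : ∑ i ∈ Finset.range N, B i = 0)
    (hN : 0 < N) (m : ℕ) (hm : m ≤ N) : 0 ≤ det2 (B (N-1)) (PS B m) := by
  have h := Hlem hBrep hR hmono hwrap hzero (N-1) m (by omega) hm
  have hPN : PS B ((N-1)+1) = 0 := by
    have : (N-1)+1 = N := by omega
    rw [this]; exact hzero
  rw [PS_succ] at hPN
  have hPS : PS B (N-1) = -(B (N-1)) := by
    have := hPN
    linear_combination (norm := (ext <;> simp <;> ring_nf)) this
  rw [hPS] at h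
  have h2 : det2 (B (N-1)) (PS B m - -(B (N-1))) = det2 (B (N-1)) (PS B m) := by
    simp [det2]; ring
  rw [h2] at h
  exact h

lemma Qtrans (u v w : ℝ × ℝ) (hu1 : 0 ≤ u.1) (hu2 : 0 ≤ u.2)
    (hv1 : 0 ≤ v.1) (hv2 : 0 ≤ v.2) (hw1 : 0 ≤ w.1) (hw2 : 0 ≤ w.2)
    (hv : v ≠ 0) (huv : 0 ≤ det2 u v) (hvw : 0 ≤ det2 v w) : 0 ≤ det2 u w := by
  by_contra hlt
  push_neg at hlt
  have hid1 : det2 u w * v.1 = det2 u v * w.1 + det2 v w * u.1 := by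
    simp [det2]; ring
  have hid2 : det2 u w * v.2 = det2 u v * w.2 + det2 v w * u.2 := by
    simp [det2]; ring
  have hv1' : v.1 = 0 := by nlinarith
  have hv2' : v.2 = 0 := by nlinarith
  exact hv (Prod.ext hv1' hv2')

lemma pluecker (e f x y : ℝ × ℝ) :
    det2 (det2 x f, det2 e x) (det2 y f, det2 e y) = det2 e f * det2 x y := by
  simp [det2]; ring

lemma Epos {N : ℕ} {B : ℕ → ℝ × ℝ} {θ R : ℕ → ℝ}
    (hBrep : ∀ i, i < N → B i = (R i * Real.cos (θ i), R i * Real.sin (θ i)))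
    (hR : ∀ i, i < N → 0 < R i)
    (hwrap : ∀ i j, i < N → j < N → θ i < θ j + 2 * π)
    (hN : 0 < N) (hgap : π < θ (N-1) - θ 0) :
    det2 (B 0) (B (N-1)) < 0 := by
  rw [detBB hBrep 0 (N-1) hN (by omega)]
  have hw := hwrap (N-1) 0 (by omega) hN
  have := sin_neg_of_pi_lt hgap (by linarith)
  have hp := mul_pos (hR 0 hN) (hR (N-1) (by omega))
  nlinarith

lemma Fan {N : ℕ} {B : ℕ → ℝ × ℝ} {θ R : ℕ → ℝ}
    (hBrep : ∀ i, i < N → B i = (R i * Real.cos (θ i), R i * Real.sin (θ i)))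
    (hR : ∀ i, i < N → 0 < R i)
    (hmono : ∀ i j, i ≤ j → j < N → θ i ≤ θ j)
    (hwrap : ∀ i j, i < N → j < N → θ i < θ j + 2 * π)
    (hzero : ∑ i ∈ Finset.range N, B i = 0)
    (hN : 0 < N) (hgap : π < θ (N-1) - θ 0)
    (a b : ℕ) (hab : a ≤ b) (hbN : b ≤ N) : 0 ≤ det2 (PS B a) (PS B b) := by
  rcases Nat.eq_zero_or_pos a with ha0 | ha0
  · subst ha0
    have : PS B 0 = 0 := by simp [PS]
    rw [this]
    simp [det2]
  have hD : 0 < det2 (B 0) (-(B (N-1))) := by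
    rw [det2_neg_right]
    have := Epos hBrep hR hwrap hN hgap
    linarith
  set f : ℝ × ℝ := -(B (N-1)) with hf
  have hconeF : ∀ m, m ≤ N → 0 ≤ det2 (PS B m) f := by
    intro m hm
    rw [hf]
    have := ConeF hBrep hR hmono hwrap hzero hN m hm
    have h2 : det2 (PS B m) (-(B (N-1))) = det2 (B (N-1)) (PS B m) := by
      simp [det2]; ring
    rw [h2]
    exact this
  have hconeE : ∀ m, m ≤ N → 0 ≤ det2 (B 0) (PS B m) :=
    fun m hm => ConeE hBrep hR hmono hwrap hzero hN m hm
  induction b, hab using Nat.le_induction with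
  | base => rw [det2_self]
  | succ b hab ih =>
    have hbN' : b < N := by omega
    rcases eq_or_lt_of_le hab with heq | hlt
    · subst heq
      exact Dnn hBrep hR hmono hwrap hzero a hbN'
    · have ihb := ih (by omega)
      have hb0 : 0 < b := lt_trans ha0 hlt
      have hPSb : PS B b ≠ 0 := NZlem hBrep hR hmono hwrap hzero b hb0 hbN'
      set Φ : (ℝ × ℝ) → (ℝ × ℝ) := fun x => (det2 x f, det2 (B 0) x) with hΦ
      have hcoords : ∀ m, m ≤ N → 0 ≤ (Φ (PS B m)).1 ∧ 0 ≤ (Φ (PS B m)).2 := by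
        intro m hm
        exact ⟨hconeF m hm, hconeE m hm⟩
      have hnz : Φ (PS B b) ≠ 0 := by
        intro hcon
        have h1 : det2 (PS B b) f = 0 := congrArg Prod.fst hcon
        have h2 : det2 (B 0) (PS B b) = 0 := congrArg Prod.snd hcon
        have hcr := cramer2 (B 0) f (PS B b)
        rw [h1, h2] at hcr
        simp only [zero_smul, add_zero] at hcr
        have : PS B b = 0 := by
          have hD' : det2 (B 0) f ≠ 0 := ne_of_gt hD
          exact (smul_eq_zero.1 hcr).resolve_left hD'
        exact hPSb this
      have key := Qtrans (Φ (PS B a)) (Φ (PS B b)) (Φ (PS B (b+1)))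
        (hcoords a (by omega)).1 (hcoords a (by omega)).2
        (hcoords b (by omega)).1 (hcoords b (by omega)).2
        (hcoords (b+1) (by omega)).1 (hcoords (b+1) (by omega)).2
        hnz
        (by rw [hΦ]; rw [pluecker]
            exact mul_nonneg hD.le ihb)
        (by rw [hΦ]; rw [pluecker]
            exact mul_nonneg hD.le (Dnn hBrep hR hmono hwrap hzero b hbN'))
      rw [hΦ] at key
      rw [pluecker] at key
      nlinarith

lemma det2_smul_left (c : ℝ) (u v : ℝ × ℝ) : det2 (c • u) v = c * det2 u v := by
  simp [det2]; ring

lemma det2_zero_right (u : ℝ × ℝ) : det2 u 0 = 0 := by simp [det2]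

lemma COVER {N : ℕ} {B : ℕ → ℝ × ℝ} {θ R : ℕ → ℝ}
    (hBrep : ∀ i, i < N → B i = (R i * Real.cos (θ i), R i * Real.sin (θ i)))
    (hR : ∀ i, i < N → 0 < R i)
    (hmono : ∀ i j, i ≤ j → j < N → θ i ≤ θ j)
    (hwrap : ∀ i j, i < N → j < N → θ i < θ j + 2 * π)
    (hzero : ∑ i ∈ Finset.range N, B i = 0)
    (hN : 0 < N) (hgap : π < θ (N-1) - θ 0)
    (z : ℝ × ℝ) (hz : z ∈ convexHull ℝ {x : ℝ × ℝ | ∃ m, 1 ≤ m ∧ m ≤ N ∧ x = PS B m})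
    (hzL : ∀ m, 1 ≤ m → m ≤ N-1 → det2 (PS B m) z ≠ 0) :
    ∃ j, j < N ∧ z ∈ convexHull ℝ {(0 : ℝ × ℝ), PS B j, PS B (j+1)} := by
  have hN2 : 2 ≤ N := by
    by_contra hcon
    push_neg at hcon
    have hN1 : N = 1 := by omega
    rw [hN1] at hgap
    simp at hgap
    linarith [Real.pi_pos]
  rw [convexHull_eq] at hz
  obtain ⟨ι, t, w, zf, hw0, hw1, hzfV, hcm⟩ := hz
  have hzrep : z = ∑ i ∈ t, w i • zf i := by
    rw [← hcm, Finset.centerMass_eq_of_sum_1 _ _ hw1]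
  choose! m hm1 hm2 hm3 using hzfV
  have hPN : PS B N = 0 := hzero
  have heval : ∀ u : ℝ × ℝ, det2 u z = ∑ i ∈ t, w i * det2 u (zf i) := by
    intro u
    rw [hzrep, det2_sum_right']
    exact Finset.sum_congr rfl fun i _ => det2_smul_right _ _ _
  have heval' : ∀ u : ℝ × ℝ, det2 z u = ∑ i ∈ t, w i * det2 (zf i) u := by
    intro u
    rw [hzrep, det2_sum_left]
    exact Finset.sum_congr rfl fun i _ => det2_smul_left _ _ _
  have hhalf : ∀ k, k < N → 0 ≤ det2 (B k) (z - PS B k) := by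
    intro k hk
    have e1 : det2 (B k) (z - PS B k) =
        ∑ i ∈ t, w i * det2 (B k) (zf i - PS B k) := by
      rw [det2_sub_right, heval (B k)]
      have e2 : det2 (B k) (PS B k) = ∑ i ∈ t, w i * det2 (B k) (PS B k) := by
        rw [← Finset.sum_mul, hw1, one_mul]
      rw [e2, ← Finset.sum_sub_distrib]
      exact Finset.sum_congr rfl fun i _ => by rw [det2_sub_right]; ring
    rw [e1]
    apply Finset.sum_nonneg
    intro i hi
    refine mul_nonneg (hw0 i hi) ?_
    rw [hm3 i hi]
    exact Hlem hBrep hR hmono hwrap hzero k (m i) hk (hm2 i hi)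
  have hgN1 : det2 (PS B (N-1)) z ≤ 0 := by
    have h := hhalf (N-1) (by omega)
    have hPS : PS B (N-1) = -(B (N-1)) := by
      have h1 : PS B ((N-1)+1) = 0 := by
        have he : (N-1)+1 = N := by omega
        rw [he]; exact hPN
      rw [PS_succ] at h1
      linear_combination (norm := (ext <;> simp <;> ring_nf)) h1
    rw [hPS] at h ⊢
    have e : det2 (B (N-1)) (z - -(B (N-1))) = det2 (B (N-1)) z := by
      simp [det2]; ring
    rw [e] at h
    have e2 : det2 (-(B (N-1))) z = -det2 (B (N-1)) z := by
      simp [det2]; ring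
    rw [e2]
    linarith
  have hpos : ∃ mm, 1 ≤ mm ∧ mm ≤ N-1 ∧ 0 < det2 (PS B mm) z := by
    by_contra hcon
    push_neg at hcon
    have hneg : ∀ mm, 1 ≤ mm → mm ≤ N-1 → det2 (PS B mm) z < 0 := by
      intro mm h1 h2
      exact lt_of_le_of_ne (hcon mm h1 h2) (hzL mm h1 h2)
    have hzz : ∑ i ∈ t, w i * det2 (zf i) z = 0 := by
      rw [← heval' z, det2_self]
    have hterms : ∀ i ∈ t, w i * det2 (zf i) z ≤ 0 := by
      intro i hi
      rcases eq_or_lt_of_le (hm2 i hi : m i ≤ N) with hmi | hmi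
      · rw [hm3 i hi, hmi, hPN, det2_zero_left]
        simp
      · have := hneg (m i) (hm1 i hi) (by omega)
        rw [hm3 i hi]
        exact mul_nonpos_of_nonneg_of_nonpos (hw0 i hi) this.le
    have hall0 := (Finset.sum_eq_zero_iff_of_nonpos hterms).1 hzz
    have hz0 : z = 0 := by
      rw [hzrep]
      apply Finset.sum_eq_zero
      intro i hi
      rcases eq_or_ne (w i) 0 with hwi | hwi
      · rw [hwi, zero_smul]
      · have h2 : det2 (zf i) z = 0 := by
          rcases mul_eq_zero.1 (hall0 i hi) with h | h
          · exact absurd h hwi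
          · exact h
        rcases eq_or_lt_of_le (hm2 i hi : m i ≤ N) with hmi | hmi
        · rw [hm3 i hi, hmi, hPN, smul_zero]
        · exfalso
          rw [hm3 i hi] at h2
          exact (hneg (m i) (hm1 i hi) (by omega)).ne h2
    exact hzL 1 le_rfl (by omega) (by rw [hz0, det2_zero_right])
  obtain ⟨m0, hm01, hm02, hm03⟩ := hpos
  set M : Finset ℕ := (Finset.Icc 1 (N-1)).filter (fun mm => 0 < det2 (PS B mm) z) with hM
  have hMne : M.Nonempty :=
    ⟨m0, Finset.mem_filter.2 ⟨Finset.mem_Icc.2 ⟨hm01, hm02⟩, hm03⟩⟩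
  set j := M.max' hMne with hj
  have hjM : j ∈ M := M.max'_mem hMne
  have hjIcc := (Finset.mem_filter.1 hjM).1
  have hjpos : 0 < det2 (PS B j) z := (Finset.mem_filter.1 hjM).2
  rw [Finset.mem_Icc] at hjIcc
  have hjne : j ≠ N-1 := by
    intro hcon
    rw [hcon] at hjpos
    linarith
  have hjle : j + 1 ≤ N - 1 := by omega
  have hj1neg : det2 (PS B (j+1)) z < 0 := by
    have hnotM : j + 1 ∉ M := by
      intro hcon
      have := Finset.le_max' M (j+1) hcon
      omega
    have : ¬ (0 < det2 (PS B (j+1)) z) := by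
      intro hcon
      exact hnotM (Finset.mem_filter.2 ⟨Finset.mem_Icc.2 ⟨by omega, hjle⟩, hcon⟩)
    have hne := hzL (j+1) (by omega) hjle
    push_neg at this
    exact lt_of_le_of_ne this hne
  -- positivity of D
  have hhj := hhalf j (by omega)
  have hBj : B j = PS B (j+1) - PS B j := by rw [PS_succ]; abel
  have hexp : det2 (PS B (j+1) - PS B j) (z - PS B j) =
      det2 (PS B (j+1)) z + det2 (PS B j) (PS B (j+1)) - det2 (PS B j) z := by
    simp [det2]; ring
  rw [hBj, hexp] at hhj
  set D := det2 (PS B j) (PS B (j+1)) with hD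
  have hDpos : 0 < D := by linarith
  -- representation z = s • PS j + tt • PS (j+1)
  set s : ℝ := (-(det2 (PS B (j+1)) z)) / D with hs
  set tt : ℝ := det2 (PS B j) z / D with htt
  have hzst : z = s • PS B j + tt • PS B (j+1) := by
    have hcr := cramer2 (PS B j) (PS B (j+1)) z
    have hswap : det2 z (PS B (j+1)) = -(det2 (PS B (j+1)) z) := by
      unfold det2; ring
    rw [hswap] at hcr
    have : z = D⁻¹ • (D • z) := by
      rw [smul_smul, inv_mul_cancel₀ hDpos.ne', one_smul]
    rw [this, hcr, smul_add, smul_smul, smul_smul]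
    rw [hs, htt]
    congr 1 <;> congr 1 <;> field_simp
  have hspos : 0 < s := by
    rw [hs]
    exact div_pos (by linarith) hDpos
  have httpos : 0 < tt := by
    rw [htt]
    exact div_pos hjpos hDpos
  have hst1 : s + tt ≤ 1 := by
    rw [hs, htt, ← add_div, div_le_one hDpos]
    linarith
  refine ⟨j, by omega, ?_⟩
  have hmem := Finset.centerMass_mem_convexHull (Finset.univ : Finset (Fin 3))
    (w := ![1 - s - tt, s, tt]) (z := ![(0 : ℝ × ℝ), PS B j, PS B (j+1)])
    (by intro i _; fin_cases i <;> simp <;> linarith)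
    (by rw [Fin.sum_univ_three]; simp; linarith)
    (s := {(0 : ℝ × ℝ), PS B j, PS B (j+1)})
    (by intro i _; fin_cases i <;> simp)
  have heq : (Finset.univ : Finset (Fin 3)).centerMass
      ![1 - s - tt, s, tt] ![(0 : ℝ × ℝ), PS B j, PS B (j+1)] = z := by
    rw [Finset.centerMass_eq_of_sum_1 _ _ (by rw [Fin.sum_univ_three]; simp; ring)]
    rw [Fin.sum_univ_three]
    simp only [Matrix.cons_val_zero, Matrix.cons_val_one, Matrix.head_cons,
      Matrix.cons_val_two, Matrix.tail_cons, smul_zero, zero_add]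
    exact hzst.symm
  rw [← heq]
  exact hmem

lemma halfspace_nonpos_convex (u : ℝ × ℝ) : Convex ℝ {x : ℝ × ℝ | det2 u x ≤ 0} := by
  intro x hx y hy a b ha hb _
  simp only [Set.mem_setOf_eq, det2] at *
  simp only [Prod.fst_add, Prod.snd_add, Prod.smul_fst, Prod.smul_snd, smul_eq_mul]
  nlinarith

lemma halfspace_nonneg_convex (u : ℝ × ℝ) : Convex ℝ {x : ℝ × ℝ | 0 ≤ det2 u x} := by
  intro x hx y hy a b ha hb _
  simp only [Set.mem_setOf_eq, det2] at *
  simp only [Prod.fst_add, Prod.snd_add, Prod.smul_fst, Prod.smul_snd, smul_eq_mul]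
  nlinarith

lemma VOL {N : ℕ} {B : ℕ → ℝ × ℝ} {θ R : ℕ → ℝ}
    (hBrep : ∀ i, i < N → B i = (R i * Real.cos (θ i), R i * Real.sin (θ i)))
    (hR : ∀ i, i < N → 0 < R i)
    (hmono : ∀ i j, i ≤ j → j < N → θ i ≤ θ j)
    (hwrap : ∀ i j, i < N → j < N → θ i < θ j + 2 * π)
    (hzero : ∑ i ∈ Finset.range N, B i = 0)
    (hN : 0 < N) (hgap : π < θ (N-1) - θ 0) :
    volume (convexHull ℝ {x : ℝ × ℝ | ∃ m, 1 ≤ m ∧ m ≤ N ∧ x = PS B m}) =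
      ENNReal.ofReal (∑ k ∈ Finset.range N, det2 (PS B k) (PS B (k+1)) / 2) := by
  have hPN : PS B N = 0 := hzero
  set V : Set (ℝ × ℝ) := {x : ℝ × ℝ | ∃ m, 1 ≤ m ∧ m ≤ N ∧ x = PS B m} with hV
  set Δ := convexHull ℝ V with hΔ
  set T : ℕ → Set (ℝ × ℝ) := fun k => convexHull ℝ {(0 : ℝ × ℝ), PS B k, PS B (k+1)} with hT
  have hDk : ∀ k, k < N → 0 ≤ det2 (PS B k) (PS B (k+1)) :=
    fun k hk => Dnn hBrep hR hmono hwrap hzero k hk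
  have hTsubΔ : ∀ k, k < N → T k ⊆ Δ := by
    intro k hk
    apply convexHull_mono
    intro x hx
    rcases hx with h | h | h <;> subst h
    · exact ⟨N, by omega, le_rfl, hPN.symm⟩
    · rcases Nat.eq_zero_or_pos k with hk0 | hk0
      · rw [hk0]
        exact ⟨N, by omega, le_rfl, by rw [hPN]; simp [PS]⟩
      · exact ⟨k, hk0, hk.le, rfl⟩
    · exact ⟨k+1, by omega, by omega, rfl⟩
  have hvolT : ∀ k, k < N → volume (T k) =
      ENNReal.ofReal (det2 (PS B k) (PS B (k+1)) / 2) :=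
    fun k hk => volume_triangle _ _ (hDk k hk)
  have hTnm : ∀ k, NullMeasurableSet (T k) volume := by
    intro k
    exact (((Set.toFinite _).isCompact_convexHull ℝ).isClosed.measurableSet).nullMeasurableSet
  have key : ∀ j k, j < k → k < N → volume (T j ∩ T k) = 0 := by
    intro j k hjk hkN
    have hjN : j < N := lt_trans hjk hkN
    have sub1 : T j ⊆ {x : ℝ × ℝ | det2 (PS B (j+1)) x ≤ 0} := by
      apply convexHull_min _ (halfspace_nonpos_convex _)
      intro x hx
      rcases hx with h | h | h <;> subst h
      · simp [det2]
      · show det2 (PS B (j+1)) (PS B j) ≤ 0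
        have h1 : det2 (PS B (j+1)) (PS B j) = -det2 (PS B j) (PS B (j+1)) := by
          unfold det2; ring
        rw [h1]
        linarith [hDk j hjN]
      · show det2 (PS B (j+1)) (PS B (j+1)) ≤ 0
        rw [det2_self]
    have sub2 : T k ⊆ {x : ℝ × ℝ | 0 ≤ det2 (PS B (j+1)) x} := by
      apply convexHull_min _ (halfspace_nonneg_convex _)
      intro x hx
      rcases hx with h | h | h <;> subst h
      · simp [det2]
      · exact Fan hBrep hR hmono hwrap hzero hN hgap (j+1) k hjk hkN.le
      · exact Fan hBrep hR hmono hwrap hzero hN hgap (j+1) (k+1) (by omega) (by omega)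
    have hsub : T j ∩ T k ⊆ {x : ℝ × ℝ | det2 (PS B (j+1)) x = 0} := by
      intro x hx
      exact le_antisymm (sub1 hx.1) (sub2 hx.2)
    have hPSne : PS B (j+1) ≠ 0 :=
      NZlem hBrep hR hmono hwrap hzero (j+1) (by omega) (by omega)
    exact measure_mono_null hsub (null_line hPSne)
  have hAED : (↑(Finset.range N) : Set ℕ).Pairwise (Function.onFun (AEDisjoint volume) T) := by
    intro j hj k hk hjk
    simp only [Finset.coe_range, Set.mem_Iio] at hj hk
    rcases lt_or_gt_of_ne hjk with h | h
    · exact key j k h hk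
    · have := key k j h hj
      rw [Set.inter_comm] at this
      exact this
  have hUnion : volume (⋃ k ∈ Finset.range N, T k) = ∑ k ∈ Finset.range N, volume (T k) :=
    measure_biUnion_finset₀ hAED (fun k _ => hTnm k)
  have hUsub : (⋃ k ∈ Finset.range N, T k) ⊆ Δ := by
    apply Set.iUnion₂_subset
    intro k hk
    exact hTsubΔ k (Finset.mem_range.1 hk)
  set L : Set (ℝ × ℝ) := ⋃ mm ∈ Finset.Icc 1 (N-1), {x : ℝ × ℝ | det2 (PS B mm) x = 0}
    with hL
  have hLnull : volume L = 0 := by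
    rw [hL]
    refine (measure_biUnion_null_iff (Finset.Icc 1 (N-1)).countable_toSet).2 ?_
    intro mm hmm
    rw [Finset.mem_coe, Finset.mem_Icc] at hmm
    exact null_line (NZlem hBrep hR hmono hwrap hzero mm (by omega) (by omega))
  have hΔsub : Δ ⊆ (⋃ k ∈ Finset.range N, T k) ∪ L := by
    intro z hzΔ
    by_cases hzL : z ∈ L
    · exact Or.inr hzL
    · left
      have hzL' : ∀ mm, 1 ≤ mm → mm ≤ N-1 → det2 (PS B mm) z ≠ 0 := by
        intro mm h1 h2 hcon
        exact hzL (Set.mem_biUnion (Finset.mem_Icc.2 ⟨h1, h2⟩) hcon)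
      obtain ⟨j, hj, hmem⟩ :=
        COVER hBrep hR hmono hwrap hzero hN hgap z hzΔ hzL'
      exact Set.mem_biUnion (Finset.mem_range.2 hj) hmem
  have hvolΔ : volume Δ = volume (⋃ k ∈ Finset.range N, T k) := by
    apply le_antisymm
    · calc volume Δ ≤ volume ((⋃ k ∈ Finset.range N, T k) ∪ L) := measure_mono hΔsub
        _ ≤ volume (⋃ k ∈ Finset.range N, T k) + volume L := measure_union_le _ _
        _ = volume (⋃ k ∈ Finset.range N, T k) := by rw [hLnull, add_zero]
    · exact measure_mono hUsub
  rw [hvolΔ, hUnion]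
  rw [ENNReal.ofReal_sum_of_nonneg
    (fun k hk => div_nonneg (hDk k (Finset.mem_range.1 hk)) (by norm_num))]
  apply Finset.sum_congr rfl
  intro k hk
  exact hvolT k (Finset.mem_range.1 hk)



lemma detPolar (r1 t1 r2 t2 : ℝ) :
    det2 (r1 * Real.cos t1, r1 * Real.sin t1) (r2 * Real.cos t2, r2 * Real.sin t2)
      = r1 * r2 * Real.sin (t2 - t1) := by
  simp [det2, Real.sin_sub]
  ring

lemma det2_eq_smul_comb (u v x : ℝ × ℝ) (hD : det2 u v ≠ 0)
    (s t : ℝ) (hx : x = s • u + t • v) :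
    s * det2 u v = det2 x v ∧ t * det2 u v = det2 u x := by
  subst hx
  constructor
  · show s * det2 u v = det2 (s • u + t • v) v
    simp [det2]; ring
  · show t * det2 u v = det2 u (s • u + t • v)
    simp [det2]; ring

lemma posCone_mem_iff {u v : ℝ × ℝ} (hD : det2 u v ≠ 0) (x : ℝ × ℝ) :
    x ∈ posCone u v ↔ 0 ≤ det2 x v * det2 u v ∧ 0 ≤ det2 u x * det2 u v := by
  constructor
  · rintro ⟨s, t, hs, ht, hx⟩
    obtain ⟨h1, h2⟩ := det2_eq_smul_comb u v x hD s t hx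
    constructor
    · rw [← h1]
      nlinarith [sq_nonneg (det2 u v)]
    · rw [← h2]
      nlinarith [sq_nonneg (det2 u v)]
  · rintro ⟨h1, h2⟩
    have e1 : det2 x v / det2 u v = det2 x v * det2 u v / (det2 u v)^2 := by
      field_simp
    have e2 : det2 u x / det2 u v = det2 u x * det2 u v / (det2 u v)^2 := by
      field_simp
    refine ⟨det2 x v / det2 u v, det2 u x / det2 u v,
      by rw [e1]; exact div_nonneg h1 (sq_nonneg _),
      by rw [e2]; exact div_nonneg h2 (sq_nonneg _), ?_⟩
    have hcr := cramer2 u v x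
    have key : det2 u v • x =
        det2 u v • ((det2 x v / det2 u v) • u + (det2 u x / det2 u v) • v) := by
      rw [hcr, smul_add, smul_smul, smul_smul]
      congr 2 <;> field_simp
    exact smul_right_injective _ hD key

lemma cont_detR (v : ℝ × ℝ) (c : ℝ) : Continuous (fun x : ℝ × ℝ => det2 x v * c) :=
  (((continuous_fst.mul continuous_const).sub (continuous_const.mul continuous_snd)).mul
    continuous_const)

lemma cont_detL (u : ℝ × ℝ) (c : ℝ) : Continuous (fun x : ℝ × ℝ => det2 u x * c) :=
  (((continuous_const.mul continuous_snd).sub (continuous_fst.mul continuous_const)).mul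
    continuous_const)

lemma isClosed_posCone {u v : ℝ × ℝ} (hD : det2 u v ≠ 0) : IsClosed (posCone u v) := by
  have : posCone u v = {x : ℝ × ℝ | 0 ≤ det2 x v * det2 u v} ∩
      {x : ℝ × ℝ | 0 ≤ det2 u x * det2 u v} := by
    ext x
    rw [posCone_mem_iff hD]
    rfl
  rw [this]
  exact (isClosed_le continuous_const (cont_detR v _)).inter
    (isClosed_le continuous_const (cont_detL u _))

lemma strict_cone {u v : ℝ × ℝ} (hD : det2 u v ≠ 0) (x : ℝ × ℝ)
    (hx : x ∈ posCone u v) (hru : x ∉ rayThru u) (hrv : x ∉ rayThru v) :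
    0 < det2 x v * det2 u v ∧ 0 < det2 u x * det2 u v := by
  obtain ⟨s, t, hs, ht, hrep⟩ := hx
  obtain ⟨h1, h2⟩ := det2_eq_smul_comb u v x hD s t hrep
  have hmem := (posCone_mem_iff hD x).1 ⟨s, t, hs, ht, hrep⟩
  constructor
  · rcases eq_or_lt_of_le hmem.1 with h | h
    · exfalso
      have hs0 : s = 0 := by
        have : s * det2 u v * det2 u v = 0 := by rw [h1]; linarith
        have h3 : det2 u v * det2 u v ≠ 0 := mul_ne_zero hD hD
        have := mul_assoc s (det2 u v) (det2 u v) ▸ this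
        exact (mul_eq_zero.1 this).resolve_right h3
      apply hrv
      exact ⟨t, ht, by rw [hrep, hs0, zero_smul, zero_add]⟩
    · exact h
  · rcases eq_or_lt_of_le hmem.2 with h | h
    · exfalso
      have ht0 : t = 0 := by
        have : t * det2 u v * det2 u v = 0 := by rw [h2]; linarith
        have h3 : det2 u v * det2 u v ≠ 0 := mul_ne_zero hD hD
        have := mul_assoc t (det2 u v) (det2 u v) ▸ this
        exact (mul_eq_zero.1 this).resolve_right h3
      apply hru
      exact ⟨s, hs, by rw [hrep, ht0, zero_smul, add_zero]⟩
    · exact h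

lemma coneIff {ι : Type*} (F : ι → ℝ × ℝ) (iu iv : ι) (u v : ℝ × ℝ)
    (hu : F iu = u) (hv : F iv = v) (hD : det2 u v ≠ 0)
    (x₀ : ℝ × ℝ) (hx₀ : x₀ ∈ (⋃ i, rayThru (F i))ᶜ) :
    closure (connectedComponentIn ((⋃ i, rayThru (F i))ᶜ) x₀) ⊆ posCone u v ↔
      x₀ ∈ posCone u v := by
  set O := (⋃ i, rayThru (F i))ᶜ with hO
  have hray : ∀ y, y ∈ O → y ∉ rayThru u ∧ y ∉ rayThru v := by
    intro y hy
    constructor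
    · intro h
      exact hy (Set.mem_iUnion.2 ⟨iu, hu ▸ h⟩)
    · intro h
      exact hy (Set.mem_iUnion.2 ⟨iv, hv ▸ h⟩)
  constructor
  · intro hsub
    exact hsub (subset_closure (mem_connectedComponentIn hx₀))
  · intro hx₀cone
    set Op := {x : ℝ × ℝ | 0 < det2 x v * det2 u v ∧ 0 < det2 u x * det2 u v} with hOp
    have hOpopen : IsOpen Op :=
      (isOpen_lt continuous_const (cont_detR v _)).inter
        (isOpen_lt continuous_const (cont_detL u _))
    have hOpsub : Op ⊆ posCone u v := fun x hx => (posCone_mem_iff hD x).2 ⟨hx.1.le, hx.2.le⟩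
    have hcompsub : connectedComponentIn O x₀ ⊆ Op ∪ (posCone u v)ᶜ := by
      intro y hy
      have hyO : y ∈ O := connectedComponentIn_subset _ _ hy
      by_cases hyc : y ∈ posCone u v
      · exact Or.inl (strict_cone hD y hyc (hray y hyO).1 (hray y hyO).2)
      · exact Or.inr hyc
    have hconn := (isConnected_connectedComponentIn_iff.2 hx₀).isPreconnected
    have hdisj : Disjoint Op (posCone u v)ᶜ :=
      Set.disjoint_left.2 fun x hx hxc => hxc (hOpsub hx)
    have hne : (connectedComponentIn O x₀ ∩ Op).Nonempty :=
      ⟨x₀, mem_connectedComponentIn hx₀,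
        strict_cone hD x₀ hx₀cone (hray x₀ hx₀).1 (hray x₀ hx₀).2⟩
    have hsub2 := hconn.subset_left_of_subset_union hOpopen
      (isClosed_posCone hD).isOpen_compl hdisj hcompsub hne
    calc closure (connectedComponentIn O x₀)
        ⊆ closure (posCone u v) := closure_mono (hsub2.trans hOpsub)
      _ = posCone u v := (isClosed_posCone hD).closure_eq

lemma trigKey {α β : ℝ} (hβ0 : 0 ≤ β) (hβ2 : β < 2*π) (hα1 : -(2*π) < α) (hα2 : α < 2*π)
    (hαβ : β - 2*π < α) (ha0 : α ≠ 0) (hab : α ≠ β) (hs : Real.sin β ≠ 0) :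
    (0 < α ∧ α < β) ↔
      ((0 < Real.sin β ∧ (0 ≤ Real.sin (β - α) ∧ 0 ≤ Real.sin α)) ∨
       (Real.sin β < 0 ∧ ¬(Real.sin (β - α) ≤ 0 ∧ Real.sin α ≤ 0))) := by
  have hpi := Real.pi_pos
  rcases lt_trichotomy (Real.sin β) 0 with hsb | hsb | hsb
  · -- sin β < 0, so π < β < 2π
    have hβπ : π < β := by
      by_contra h
      push_neg at h
      exact absurd (Real.sin_nonneg_of_nonneg_of_le_pi hβ0 h) (by linarith)
    constructor
    · rintro ⟨h1, h2⟩
      refine Or.inr ⟨hsb, ?_⟩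
      rintro ⟨h3, h4⟩
      rcases lt_or_ge α π with h5 | h5
      · exact absurd (Real.sin_pos_of_pos_of_lt_pi h1 h5) (by linarith)
      · have : 0 < Real.sin (β - α) :=
          Real.sin_pos_of_pos_of_lt_pi (by linarith) (by linarith)
        linarith
    · rintro (⟨h1, _⟩ | ⟨_, hn⟩)
      · linarith
      · by_contra hcon
        apply hn
        rcases lt_trichotomy α 0 with h5 | h5 | h5
        · constructor
          · exact (sin_neg_of_pi_lt (by linarith) (by linarith)).le
          · exact (sin_neg_of_neg (by linarith) h5).le
        · exact absurd h5 ha0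
        · have h6 : β < α := by
            rcases lt_or_ge β α with h | h
            · exact h
            · exact absurd ⟨h5, lt_of_le_of_ne h hab⟩ hcon
          constructor
          · exact (sin_neg_of_neg (by linarith) (by linarith)).le
          · exact (sin_neg_of_pi_lt (by linarith) (by linarith)).le
  · exact absurd hsb hs
  · -- 0 < sin β, so 0 < β < π
    have hβπ : β < π := by
      by_contra h
      push_neg at h
      exact absurd (sin_nonpos_of_pi_le h hβ2.le) (by linarith)
    have hβ0' : 0 < β := by
      rcases eq_or_lt_of_le hβ0 with h | h
      · exfalso; rw [← h] at hsb; simp at hsb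
      · exact h
    constructor
    · rintro ⟨h1, h2⟩
      exact Or.inl ⟨hsb, (Real.sin_pos_of_pos_of_lt_pi (by linarith) (by linarith)).le,
        (Real.sin_pos_of_pos_of_lt_pi h1 (by linarith)).le⟩
    · rintro (⟨_, h3, h4⟩ | ⟨h1, _⟩)
      · -- 0 ≤ sin (β-α), 0 ≤ sin α
        have hα_pos : 0 < α := by
          rcases lt_trichotomy α 0 with h5 | h5 | h5
          · exfalso
            rcases lt_or_ge (-π) α with h6 | h6
            · exact absurd (sin_neg_of_neg h6 h5) (by linarith)
            · have : Real.sin (β - α) < 0 :=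
                sin_neg_of_pi_lt (by linarith) (by linarith)
              linarith
          · exact absurd h5 ha0
          · exact h5
        have hα_lt : α < β := by
          rcases lt_trichotomy α β with h5 | h5 | h5
          · exact h5
          · exact absurd h5 hab
          · exfalso
            have hαπ : α ≤ π := by
              by_contra h6
              push_neg at h6
              exact absurd (sin_neg_of_pi_lt h6 hα2) (by linarith)
            have : Real.sin (β - α) < 0 :=
              sin_neg_of_neg (by linarith) (by linarith)
            linarith
        exact ⟨hα_pos, hα_lt⟩
      · linarith

lemma exists_polar (x : ℝ × ℝ) (hx : x ≠ 0) :
    ∃ ρ φ : ℝ, 0 < ρ ∧ x = (ρ * Real.cos φ, ρ * Real.sin φ) := by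
  set z : ℂ := ⟨x.1, x.2⟩ with hzdef
  have hz : z ≠ 0 := by
    intro h
    apply hx
    have h1 : z.re = 0 := by rw [h]; simp
    have h2 : z.im = 0 := by rw [h]; simp
    exact Prod.ext h1 h2
  have habs : 0 < ‖z‖ := norm_pos_iff.mpr hz
  have hc := Complex.cos_arg hz
  have hs := Complex.sin_arg z
  refine ⟨‖z‖, z.arg, habs, ?_⟩
  have h1 : ‖z‖ * Real.cos z.arg = x.1 := by
    rw [hc]
    field_simp; rfl
  have h2 : ‖z‖ * Real.sin z.arg = x.2 := by
    rw [hs]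
    field_simp; rfl
  rw [h1, h2]

lemma window (φ0 a : ℝ) : ∃ φ : ℝ, a ≤ φ ∧ φ < a + 2*π ∧
    Real.cos φ = Real.cos φ0 ∧ Real.sin φ = Real.sin φ0 := by
  have h2π : (0:ℝ) < 2*π := by linarith [Real.pi_pos]
  refine ⟨φ0 + (⌈(a - φ0)/(2*π)⌉ : ℤ) * (2*π), ?_, ?_,
    Real.cos_add_int_mul_two_pi _ _, Real.sin_add_int_mul_two_pi _ _⟩
  · have h := Int.le_ceil ((a - φ0)/(2*π))
    rw [div_le_iff₀ h2π] at h
    linarith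
  · have h := Int.ceil_lt_add_one ((a - φ0)/(2*π))
    have h3 : ((⌈(a - φ0)/(2*π)⌉ : ℤ) : ℝ) * (2*π) < ((a - φ0)/(2*π) + 1) * (2*π) :=
      mul_lt_mul_of_pos_right h h2π
    rw [add_mul, div_mul_cancel₀ _ h2π.ne'] at h3
    linarith

lemma sgnh1 {c1 c2 s1 s2 : ℝ} (hc1 : 0 < c1) (hc2 : 0 < c2)
    (h : 0 ≤ c1 * s1 * (c2 * s2)) (hs2 : 0 < s2) : 0 ≤ s1 := by
  by_contra hcc
  push_neg at hcc
  have h1 : c1 * s1 < 0 := mul_neg_of_pos_of_neg hc1 hcc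
  have h2 : 0 < c2 * s2 := mul_pos hc2 hs2
  have := mul_neg_of_neg_of_pos h1 h2
  linarith
lemma sgnh2 {c1 c2 s1 s2 : ℝ} (hc1 : 0 < c1) (hc2 : 0 < c2)
    (h : 0 ≤ c1 * s1 * (c2 * s2)) (hs2 : s2 < 0) : s1 ≤ 0 := by
  by_contra hcc
  push_neg at hcc
  have h1 : 0 < c1 * s1 := mul_pos hc1 hcc
  have h2 : c2 * s2 < 0 := mul_neg_of_pos_of_neg hc2 hs2
  have := mul_neg_of_pos_of_neg h1 h2
  linarith
lemma sgnh3 {c1 c2 s1 s2 : ℝ} (hc1 : 0 < c1) (hc2 : 0 < c2)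
    (hs1 : 0 ≤ s1) (hs2 : 0 < s2) : 0 ≤ c1 * s1 * (c2 * s2) :=
  mul_nonneg (mul_nonneg hc1.le hs1) (mul_nonneg hc2.le hs2.le)
lemma sgnh4 {c1 c2 s1 s2 : ℝ} (hc1 : 0 < c1) (hc2 : 0 < c2)
    (hs1 : s1 ≤ 0) (hs2 : s2 < 0) : 0 ≤ c1 * s1 * (c2 * s2) := by
  have h1 : c1 * s1 ≤ 0 := mul_nonpos_of_nonneg_of_nonpos hc1.le hs1
  have h2 : c2 * s2 ≤ 0 := mul_nonpos_of_nonneg_of_nonpos hc2.le hs2.le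
  nlinarith

lemma PAIR {N : ℕ} {B : ℕ → ℝ × ℝ} {θ R : ℕ → ℝ}
    (hBrep : ∀ i, i < N → B i = (R i * Real.cos (θ i), R i * Real.sin (θ i)))
    (hR : ∀ i, i < N → 0 < R i)
    (hmono : ∀ i j, i ≤ j → j < N → θ i ≤ θ j)
    (hwrap : ∀ i j, i < N → j < N → θ i < θ j + 2 * π)
    (x₀ : ℝ × ℝ) (ρ φ : ℝ) (hρ : 0 < ρ)
    (hx₀ : x₀ = (ρ * Real.cos φ, ρ * Real.sin φ))
    (hφlo : θ 0 < φ) (hφhi : φ < θ 0 + 2*π)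
    (hner : ∀ m, m < N → θ m ≠ φ)
    (i j : ℕ) (hi : i < N) (hj : j < N) (hij : i < j)
    (hd : det2 (B i) (B j) ≠ 0) :
    x₀ ∈ posCone (B i) (B j) ↔
      ((0 < det2 (B i) (B j) ∧ (θ i < φ ∧ φ < θ j)) ∨
       (det2 (B i) (B j) < 0 ∧ ¬(θ i < φ ∧ φ < θ j))) := by
  have hpi := Real.pi_pos
  have hdij : det2 (B i) (B j) = R i * R j * Real.sin (θ j - θ i) := by
    rw [hBrep i hi, hBrep j hj, detPolar]
  have hdx : det2 (B i) x₀ = R i * ρ * Real.sin (φ - θ i) := by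
    rw [hBrep i hi, hx₀, detPolar]
  have hdxv : det2 x₀ (B j) = ρ * R j * Real.sin ((θ j - θ i) - (φ - θ i)) := by
    rw [hx₀, hBrep j hj, detPolar]
    congr 2
    ring
  have h0i : θ 0 ≤ θ i := hmono 0 i (Nat.zero_le _) hi
  have h0j : θ 0 ≤ θ j := hmono 0 j (Nat.zero_le _) hj
  have hβ0 : 0 ≤ θ j - θ i := by linarith [hmono i j hij.le hj]
  have hβ2 : θ j - θ i < 2*π := by linarith [hwrap j i hj hi]
  have hα1 : -(2*π) < φ - θ i := by linarith [hwrap i 0 hi (by omega)]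
  have hα2 : φ - θ i < 2*π := by linarith
  have hαβ : (θ j - θ i) - 2*π < φ - θ i := by linarith [hwrap j 0 hj (by omega)]
  have ha0 : φ - θ i ≠ 0 := by
    intro h
    exact hner i hi (by linarith)
  have hab : φ - θ i ≠ θ j - θ i := by
    intro h
    exact hner j hj (by linarith)
  have hsβ : Real.sin (θ j - θ i) ≠ 0 := by
    intro h
    apply hd
    rw [hdij, h, mul_zero]
  have hRi := hR i hi
  have hRj := hR j hj
  have hRiRj : 0 < R i * R j := mul_pos hRi hRj
  have hρRj : 0 < ρ * R j := mul_pos hρ hRj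
  have hRiρ : 0 < R i * ρ := mul_pos hRi hρ
  have key := trigKey hβ0 hβ2 hα1 hα2 hαβ ha0 (fun h => hab h) hsβ
  rw [posCone_mem_iff hd x₀, hdx, hdxv]
  rw [hdij]
  constructor
  · rintro ⟨h1, h2⟩
    rcases lt_trichotomy (Real.sin (θ j - θ i)) 0 with hsb | hsb | hsb
    · right
      constructor
      · nlinarith
      · intro hcon
        have hαcon : 0 < φ - θ i ∧ φ - θ i < θ j - θ i :=
          ⟨by linarith [hcon.1], by linarith [hcon.2]⟩
        rcases key.1 hαcon with ⟨h3, _⟩ | ⟨_, hn⟩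
        · linarith
        · exact hn ⟨sgnh2 hρRj hRiRj h1 hsb, sgnh2 hRiρ hRiRj h2 hsb⟩
    · exact absurd hsb hsβ
    · left
      constructor
      · nlinarith
      · have hres := key.2 (Or.inl ⟨hsb, sgnh1 hρRj hRiRj h1 hsb, sgnh1 hRiρ hRiRj h2 hsb⟩)
        exact ⟨by linarith [hres.1], by linarith [hres.2]⟩
  · rintro (⟨h1, h2⟩ | ⟨h1, h2⟩)
    · have hsb : 0 < Real.sin (θ j - θ i) := by nlinarith
      rcases key.1 ⟨by linarith [h2.1], by linarith [h2.2]⟩ with ⟨_, h3, h4⟩ | ⟨h5, _⟩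
      · exact ⟨sgnh3 hρRj hRiRj h3 hsb, sgnh3 hRiρ hRiRj h4 hsb⟩
      · linarith
    · have hsb : Real.sin (θ j - θ i) < 0 := by nlinarith
      have hncon : ¬(0 < φ - θ i ∧ φ - θ i < θ j - θ i) := by
        intro hcon
        exact h2 ⟨by linarith [hcon.1], by linarith [hcon.2]⟩
      have hnor := mt key.2 hncon
      have hboth : Real.sin ((θ j - θ i) - (φ - θ i)) ≤ 0 ∧ Real.sin (φ - θ i) ≤ 0 := by
        by_contra hcc
        exact hnor (Or.inr ⟨hsb, hcc⟩)
      exact ⟨sgnh4 hρRj hRiRj hboth.1 hsb, sgnh4 hRiρ hRiRj hboth.2 hsb⟩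





lemma toR2_add (a b : ℤ × ℤ) : toR2 (a + b) = toR2 a + toR2 b := by
  simp [toR2, Prod.ext_iff]

lemma toR2_sum {ι : Type*} (s : Finset ι) (f : ι → ℤ × ℤ) :
    toR2 (∑ i ∈ s, f i) = ∑ i ∈ s, toR2 (f i) := by
  induction s using Finset.induction with
  | empty => simp [toR2]
  | insert _ _ h ih => rw [Finset.sum_insert h, Finset.sum_insert h, toR2_add, ih]

lemma finBridge {N : ℕ} (f : ℕ → ℕ → ℝ) :
    (∑ i : Fin N, ∑ j : Fin N, if i < j then f i.val j.val else 0)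
      = ∑ k ∈ Finset.range N, ∑ i ∈ Finset.range k, f i k := by
  have h1 : ∀ i : Fin N, (∑ j : Fin N, if i < j then f i.val j.val else 0)
      = ∑ n ∈ Finset.range N, if i.val < n then f i.val n else 0 := by
    intro i
    rw [← Fin.sum_univ_eq_sum_range (fun n => if i.val < n then f i.val n else 0) N]
    exact Finset.sum_congr rfl fun j _ => if_congr Fin.lt_def rfl rfl
  rw [Finset.sum_congr rfl (fun i _ => h1 i)]
  rw [Fin.sum_univ_eq_sum_range
    (fun m => ∑ n ∈ Finset.range N, if m < n then f m n else 0) N]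
  rw [Finset.sum_comm]
  apply Finset.sum_congr rfl
  intro n hn
  rw [Finset.mem_range] at hn
  rw [← Finset.sum_filter]
  congr 1
  ext m
  simp only [Finset.mem_filter, Finset.mem_range]
  omega

/-- area Δ = (1/2)·Σ_{i<j} |det(b i,b j)| − Σ_{{i,j} ∈ L_C} |det(b i,b j)|
for every 2-dimensional cone `C` of the secondary fan. -/
theorem stmt5 (N : ℕ) (b : Fin N → ℤ × ℤ)
    (hnz : ∀ i, b i ≠ 0)
    (hspan : Submodule.span ℝ (Set.range fun i => toR2 (b i)) = ⊤)
    (hsum : ∑ i, b i = 0)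
    (hccw : CCW fun i => toR2 (b i))
    (C : Set (ℝ × ℝ)) (hC : IsSecCone (fun i => toR2 (b i)) C) :
    MeasureTheory.volume
        (convexHull ℝ (Set.range fun k : Fin N => ∑ i ∈ Finset.Iic k, toR2 (b i))) =
      ENNReal.ofReal
        (2⁻¹ * (∑ i, ∑ j, if i < j then |det2 (toR2 (b i)) (toR2 (b j))| else 0)
          - LCsum (fun i => toR2 (b i)) C) := by
  classical
  obtain ⟨θf, rf, hmonof, hwrapf, hrf⟩ := hccw
  set B : ℕ → ℝ × ℝ := fun i => if h : i < N then toR2 (b ⟨i, h⟩) else 0 with hB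
  set θ : ℕ → ℝ := fun i => if h : i < N then θf ⟨i, h⟩ else 0 with hθ
  set R : ℕ → ℝ := fun i => if h : i < N then rf ⟨i, h⟩ else 0 with hR
  have hBval : ∀ i : Fin N, B i.val = toR2 (b i) := by
    intro i
    simp only [hB, dif_pos i.isLt]
  have hBrep : ∀ i, i < N → B i = (R i * Real.cos (θ i), R i * Real.sin (θ i)) := by
    intro i hi
    simp only [hB, hθ, hR, dif_pos hi]
    exact (hrf ⟨i, hi⟩).2
  have hRpos : ∀ i, i < N → 0 < R i := by
    intro i hi
    simp only [hR, dif_pos hi]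
    exact (hrf ⟨i, hi⟩).1
  have hmono : ∀ i j, i ≤ j → j < N → θ i ≤ θ j := by
    intro i j hij hj
    have hi : i < N := lt_of_le_of_lt hij hj
    simp only [hθ, dif_pos hi, dif_pos hj]
    exact hmonof (show (⟨i, hi⟩ : Fin N) ≤ ⟨j, hj⟩ from hij)
  have hwrap : ∀ i j, i < N → j < N → θ i < θ j + 2 * π := by
    intro i j hi hj
    simp only [hθ, dif_pos hi, dif_pos hj]
    exact hwrapf ⟨i, hi⟩ ⟨j, hj⟩
  have huniv : ∑ i : Fin N, B i.val = ∑ i : Fin N, toR2 (b i) :=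
    Finset.sum_congr rfl fun i _ => hBval i
  have hzero : ∑ i ∈ Finset.range N, B i = 0 := by
    rw [← Fin.sum_univ_eq_sum_range (fun i => B i) N, huniv, ← toR2_sum, hsum]
    simp [toR2]
  have hN : 0 < N := by
    rcases Nat.eq_zero_or_pos N with h0 | h
    · exfalso
      subst h0
      rw [Set.range_eq_empty, Submodule.span_empty] at hspan
      have h1 : ((1:ℝ), (0:ℝ)) ∈ (⊥ : Submodule ℝ (ℝ × ℝ)) := hspan ▸ Submodule.mem_top
      rw [Submodule.mem_bot] at h1
      exact absurd (congrArg Prod.fst h1) (by norm_num)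
    · exact h
  have hNC : ¬ ∀ i, i < N → ∃ t : ℝ, B i = t • B 0 := by
    intro hcol
    have hsub : Set.range (fun i : Fin N => toR2 (b i)) ⊆ ↑(Submodule.span ℝ {B 0}) := by
      rintro x ⟨i, rfl⟩
      obtain ⟨t, ht⟩ := hcol i.val i.isLt
      show toR2 (b i) ∈ (Submodule.span ℝ {B 0} : Submodule ℝ (ℝ × ℝ))
      rw [← hBval i, ht]
      exact Submodule.smul_mem _ _ (Submodule.mem_span_singleton_self _)
    have hle := Submodule.span_le.2 hsub
    rw [hspan] at hle
    exact span_singleton_ne_top (B 0) (top_le_iff.1 hle)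
  have hgap := GapLem hBrep hRpos hmono hzero hN hNC
  -- Iic partial sums
  have hIic : ∀ k : Fin N, ∑ i ∈ Finset.Iic k, toR2 (b i) = PS B (k.val + 1) := by
    intro k
    have hk := k.isLt
    rw [PS]
    have e0 : Finset.Iic k = Finset.univ.filter (· ≤ k) := by
      ext i
      simp
    rw [e0, Finset.sum_filter]
    have e1 : ∀ i : Fin N, (if i ≤ k then toR2 (b i) else 0)
        = (fun n => if n ≤ k.val then B n else 0) i.val := by
      intro i
      simp only []
      by_cases h : i ≤ k
      · rw [if_pos h, if_pos (Fin.le_def.1 h), hBval]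
      · rw [if_neg h, if_neg (fun hc => h (Fin.le_def.2 hc))]
    rw [Finset.sum_congr rfl (fun i _ => e1 i)]
    rw [Fin.sum_univ_eq_sum_range (fun n => if n ≤ k.val then B n else 0) N]
    rw [← Finset.sum_filter]
    congr 1
    ext n
    simp only [Finset.mem_filter, Finset.mem_range]
    omega
  have hVset : (Set.range fun k : Fin N => ∑ i ∈ Finset.Iic k, toR2 (b i)) =
      {x : ℝ × ℝ | ∃ m, 1 ≤ m ∧ m ≤ N ∧ x = PS B m} := by
    ext x
    simp only [Set.mem_range, Set.mem_setOf_eq]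
    constructor
    · rintro ⟨k, rfl⟩
      exact ⟨k.val + 1, by omega, by have := k.isLt; omega, (hIic k)⟩
    · rintro ⟨m, h1, h2, rfl⟩
      refine ⟨⟨m - 1, by omega⟩, ?_⟩
      rw [hIic ⟨m - 1, by omega⟩]
      show PS B (m - 1 + 1) = PS B m
      congr 1
      omega
  rw [hVset, VOL hBrep hRpos hmono hwrap hzero hN hgap]
  congr 1
  -- get the witness point of the secondary cone
  obtain ⟨x₀, hx₀O, hCeq⟩ := hC
  have hx₀ne : x₀ ≠ 0 := by
    intro h0
    apply hx₀O
    refine Set.mem_iUnion.2 ⟨⟨0, hN⟩, 0, le_rfl, ?_⟩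
    rw [h0, zero_smul]
  obtain ⟨ρ, φ0, hρ, hx₀p⟩ := exists_polar x₀ hx₀ne
  obtain ⟨φ, hφ1, hφ2, hcosφ, hsinφ⟩ := window φ0 (θ 0)
  have hx₀eq : x₀ = (ρ * Real.cos φ, ρ * Real.sin φ) := by
    rw [hx₀p, hcosφ, hsinφ]
  have hner : ∀ m, m < N → θ m ≠ φ := by
    intro m hm h
    apply hx₀O
    refine Set.mem_iUnion.2 ⟨⟨m, hm⟩, ρ / R m, (div_pos hρ (hRpos m hm)).le, ?_⟩
    show x₀ = (ρ / R m) • toR2 (b ⟨m, hm⟩)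
    have hBm : toR2 (b ⟨m, hm⟩) = B m := by simp only [hB, dif_pos hm]
    rw [hBm, hBrep m hm, hx₀eq, ← h, Prod.smul_mk]
    simp only [smul_eq_mul]
    have := (hRpos m hm).ne'
    congr 1 <;> field_simp <;> ring
  have hφlo : θ 0 < φ := lt_of_le_of_ne hφ1 (hner 0 hN)
  -- per-pair term analysis
  set d : ℕ → ℕ → ℝ := fun m n => det2 (B m) (B n) with hd
  have hAlt : ∀ i j : Fin N, (θ i.val < φ ∧ φ < θ j.val) → i < j := by
    intro i j hcond
    rw [Fin.lt_def]
    by_contra hc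
    push_neg at hc
    have := hmono j.val i.val hc i.isLt
    linarith [hcond.1, hcond.2]
  have hterm : ∀ i j : Fin N,
      (if i < j ∧ C ⊆ posCone (toR2 (b i)) (toR2 (b j))
        then |det2 (toR2 (b i)) (toR2 (b j))| else 0)
      = (if i < j then (|d i.val j.val| - d i.val j.val) / 2 else 0)
        + (if (θ i.val < φ ∧ φ < θ j.val) then d i.val j.val else 0) := by
    intro i j
    by_cases hij : i < j
    · have hijval : i.val < j.val := Fin.lt_def.1 hij
      by_cases hd0 : d i.val j.val = 0
      · have hdd : det2 (toR2 (b i)) (toR2 (b j)) = 0 := by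
          rw [← hBval i, ← hBval j]
          exact hd0
        rw [hdd, hd0]
        simp
      · have hdd : det2 (toR2 (b i)) (toR2 (b j)) ≠ 0 := by
          rw [← hBval i, ← hBval j]
          exact hd0
        have hcone := coneIff (fun i : Fin N => toR2 (b i)) i j
          (toR2 (b i)) (toR2 (b j)) rfl rfl hdd x₀ hx₀O
        have hpair := PAIR hBrep hRpos hmono hwrap x₀ ρ φ hρ hx₀eq hφlo hφ2 hner
          i.val j.val i.isLt j.isLt hijval hd0
        rw [← hBval i, ← hBval j] at hcone ⊢
        have hiff : (i < j ∧ C ⊆ posCone (B i.val) (B j.val)) ↔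
            ((0 < d i.val j.val ∧ (θ i.val < φ ∧ φ < θ j.val)) ∨
             (d i.val j.val < 0 ∧ ¬(θ i.val < φ ∧ φ < θ j.val))) := by
          rw [hCeq]
          constructor
          · rintro ⟨_, hsub⟩
            exact hpair.1 (hcone.1 hsub)
          · intro h
            exact ⟨hij, hcone.2 (hpair.2 h)⟩
        rw [if_congr hiff rfl rfl, if_pos hij]
        rcases lt_trichotomy (d i.val j.val) 0 with hs | hs | hs
        · rw [abs_of_neg hs]
          by_cases hA : (θ i.val < φ ∧ φ < θ j.val)
          · rw [if_neg, if_pos hA]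
            · ring
            · rintro (⟨h1, _⟩ | ⟨_, h2⟩)
              · linarith
              · exact h2 hA
          · rw [if_pos (Or.inr ⟨hs, hA⟩), if_neg hA]
            ring
        · exact absurd hs hd0
        · rw [abs_of_pos hs]
          by_cases hA : (θ i.val < φ ∧ φ < θ j.val)
          · rw [if_pos (Or.inl ⟨hs, hA⟩), if_pos hA]
            ring
          · rw [if_neg, if_neg hA]
            · ring
            · rintro (⟨_, h1⟩ | ⟨h2, _⟩)
              · exact hA h1
              · linarith
    · rw [if_neg (fun hc => hij hc.1), if_neg hij,
        if_neg (fun hc => hij (hAlt i j hc))]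
      simp
  -- LCsum decomposition
  have hLC : LCsum (fun i => toR2 (b i)) C =
      (∑ i : Fin N, ∑ j : Fin N, if i < j then (|d i.val j.val| - d i.val j.val) / 2 else 0)
      + (∑ i : Fin N, ∑ j : Fin N,
          if (θ i.val < φ ∧ φ < θ j.val) then d i.val j.val else 0) := by
    rw [LCsum, ← Finset.sum_add_distrib]
    apply Finset.sum_congr rfl
    intro i _
    rw [← Finset.sum_add_distrib]
    exact Finset.sum_congr rfl fun j _ => hterm i j
  -- the cross-term vanishes
  have hcross : (∑ i : Fin N, ∑ j : Fin N,
      if (θ i.val < φ ∧ φ < θ j.val) then d i.val j.val else 0) = 0 := by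
    set w := ∑ j ∈ Finset.univ.filter (fun j : Fin N => φ < θ j.val), B j.val with hw
    have hsplit : ∀ i : Fin N,
        (∑ j : Fin N, if (θ i.val < φ ∧ φ < θ j.val) then d i.val j.val else 0)
          = if θ i.val < φ then det2 (B i.val) w else 0 := by
      intro i
      by_cases h : θ i.val < φ
      · rw [if_pos h, hw, det2_sum_right', Finset.sum_filter]
        apply Finset.sum_congr rfl
        intro j _
        by_cases h2 : φ < θ j.val
        · rw [if_pos ⟨h, h2⟩, if_pos h2]
        · rw [if_neg (fun hc => h2 hc.2), if_neg h2]
      · rw [if_neg h]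
        exact Finset.sum_eq_zero fun j _ => if_neg (fun hc => h hc.1)
    rw [Finset.sum_congr rfl (fun i _ => hsplit i)]
    rw [← Finset.sum_filter, ← det2_sum_left]
    have hcompl : Finset.univ.filter (fun j : Fin N => φ < θ j.val) =
        Finset.univ.filter (fun j : Fin N => ¬ (θ j.val < φ)) := by
      apply Finset.filter_congr
      intro j _
      constructor
      · intro h1 h2
        linarith
      · intro h1
        exact lt_of_le_of_ne (not_lt.1 h1) (Ne.symm (hner j.val j.isLt))
    have huniv0 : ∑ i : Fin N, B i.val = 0 := by
      rw [Fin.sum_univ_eq_sum_range (fun i => B i) N]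
      exact hzero
    have hpart : (∑ i ∈ Finset.univ.filter (fun i : Fin N => θ i.val < φ), B i.val) + w
        = 0 := by
      rw [hw, hcompl, Finset.sum_filter_add_sum_filter_not]
      exact huniv0
    have hweq : w = -(∑ i ∈ Finset.univ.filter (fun i : Fin N => θ i.val < φ), B i.val) := by
      linear_combination (norm := (ext <;> simp <;> ring_nf)) hpart
    rw [hweq, det2_neg_right, det2_self, neg_zero]
  -- final arithmetic
  rw [hLC, hcross, add_zero]
  have hPSdet : ∀ k, k < N → det2 (PS B k) (PS B (k+1)) = ∑ i ∈ Finset.range k, d i k := by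
    intro k hk
    rw [PS_succ, det2_add_right, det2_self, zero_add, PS, det2_sum_left]
  have habs : (∑ i : Fin N, ∑ j : Fin N, if i < j then |det2 (toR2 (b i)) (toR2 (b j))| else 0)
      = ∑ i : Fin N, ∑ j : Fin N, if i < j then |d i.val j.val| else 0 := by
    apply Finset.sum_congr rfl
    intro i _
    apply Finset.sum_congr rfl
    intro j _
    rw [← hBval i, ← hBval j]
  rw [habs, finBridge (fun m n => |d m n|), finBridge (fun m n => (|d m n| - d m n) / 2),
    Finset.mul_sum, ← Finset.sum_sub_distrib]
  apply Finset.sum_congr rfl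
  intro k hk
  rw [hPSdet k (Finset.mem_range.1 hk), Finset.sum_div, Finset.mul_sum,
    ← Finset.sum_sub_distrib]
  apply Finset.sum_congr rfl
  intro i _
  ring
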